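/- Let (zᵏ)ₖ≥0 be a sequence in ℝⁿ defined by zᵏ⁺¹ = (I − ŵᵏ(ŵᵏ)ᵀ)zᵏ for unit vectors ŵᵏ. If for every k either zᵏ = 0 or ⟨ŵᵏ, zᵏ⟩ ≠ 0 with |⟨ŵᵏ, zᵏ⟩| ≥ c‖zᵏ‖ for a fixed constant c ∈ (0, 1], then ‖zᵏ‖ ≤ (1 − c²)^{k/2} ‖z⁰‖; in particular zᵏ → 0. -/

import Mathlib

theorem iterated_inlp_destroys_representation (n : ℕ) (c : ℝ)
    (hc : c ∈ Set.Ioc (0:ℝ) 1)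
    (z : ℕ → EuclideanSpace ℝ (Fin n)) (w : ℕ → EuclideanSpace ℝ (Fin n))
    (hw : ∀ k, ‖w k‖ = 1)
    (hstep : ∀ k, z (k + 1) = z k - (inner ℝ (w k) (z k) : ℝ) • w k)
    (hgood : ∀ k, z k = 0 ∨ ((inner ℝ (w k) (z k) : ℝ) ≠ 0 ∧
        |(inner ℝ (w k) (z k) : ℝ)| ≥ c * ‖z k‖)) :
    (∀ k, ‖z k‖ ≤ (1 - c ^ 2) ^ ((k : ℝ) / 2) * ‖z 0‖) ∧
    Filter.Tendsto z Filter.atTop (nhds 0) := by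
  obtain ⟨hc0, hc1⟩ := hc
  have hcsq : (0:ℝ) ≤ 1 - c ^ 2 := by nlinarith
  set r : ℝ := Real.sqrt (1 - c ^ 2) with hr
  have hr0 : 0 ≤ r := Real.sqrt_nonneg _
  have hr1 : r < 1 := by
    have h2 : r ^ 2 < 1 := by rw [hr, Real.sq_sqrt hcsq]; nlinarith
    nlinarith
  have key : ∀ k, ‖z (k+1)‖ ≤ r * ‖z k‖ := by
    intro k
    set ip : ℝ := (inner ℝ (w k) (z k) : ℝ) with hip
    have hsq : ‖z (k+1)‖ ^ 2 = ‖z k‖ ^ 2 - ip ^ 2 := by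
      have hzw : (inner ℝ (z k) (w k) : ℝ) = ip := by rw [hip, real_inner_comm]
      rw [hstep k, norm_sub_sq_real, real_inner_smul_right, hzw, norm_smul, hw k]
      simp only [Real.norm_eq_abs, sq_abs, mul_one]
      ring
    have h2 : ‖z (k+1)‖ ^ 2 ≤ (r * ‖z k‖) ^ 2 := by
      rcases hgood k with h0 | ⟨_, hge⟩
      · have hip0 : ip = 0 := by simp [hip, h0]
        rw [hsq, hip0, h0]
        simp
      · have hge' : c * ‖z k‖ ≤ |ip| := hge
        have hipsq : (c * ‖z k‖) ^ 2 ≤ ip ^ 2 := by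
          have := pow_le_pow_left₀ (by positivity) hge' 2
          rwa [sq_abs] at this
        rw [hsq, mul_pow, hr, Real.sq_sqrt hcsq]
        nlinarith [norm_nonneg (z k)]
    calc ‖z (k+1)‖ = Real.sqrt (‖z (k+1)‖ ^ 2) := (Real.sqrt_sq (norm_nonneg _)).symm
      _ ≤ Real.sqrt ((r * ‖z k‖) ^ 2) := Real.sqrt_le_sqrt h2
      _ = r * ‖z k‖ := Real.sqrt_sq (by positivity)
  have bound : ∀ k, ‖z k‖ ≤ r ^ k * ‖z 0‖ := by
    intro k
    induction k with
    | zero => simp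
    | succ k ih =>
      calc ‖z (k+1)‖ ≤ r * ‖z k‖ := key k
        _ ≤ r * (r ^ k * ‖z 0‖) := by
          exact mul_le_mul_of_nonneg_left ih hr0
        _ = r ^ (k+1) * ‖z 0‖ := by ring
  have hrpow : ∀ k : ℕ, r ^ k = (1 - c ^ 2) ^ ((k : ℝ) / 2) := by
    intro k
    rw [hr, Real.sqrt_eq_rpow, ← Real.rpow_natCast ((1 - c ^ 2) ^ ((1:ℝ)/2)) k,
      ← Real.rpow_mul hcsq]
    ring_nf
  constructor
  · intro k
    rw [← hrpow k]
    exact bound k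
  · rw [show (0 : EuclideanSpace ℝ (Fin n)) = 0 from rfl]
    have h0 : Filter.Tendsto (fun k => r ^ k * ‖z 0‖) Filter.atTop (nhds 0) := by
      simpa using (tendsto_pow_atTop_nhds_zero_of_lt_one hr0 hr1).mul_const ‖z 0‖
    rw [tendsto_zero_iff_norm_tendsto_zero]
    exact squeeze_zero (fun k => norm_nonneg _) bound h0
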